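/- arXiv:0909.5654 — 7 statements merged into one kernel-verified Lean document; each statement's English description precedes it below -/
import Mathlib

section
/- For all t ∈ [0, l], the inner product of the unit tangent vectors satisfies ⟪γ'(t), γ'(0)⟫ ≥ 1 − t²/(2ρ²). -/
open scoped RealInnerProductSpace

theorem tangent_inner_lower_bound
    {E : Type*} [NormedAddCommGroup E] [InnerProductSpace ℝ E]
    (ρ l : ℝ) (hρ : 0 < ρ) (hl : 0 < l)
    (γ γ' γ'' : ℝ → E)
    (hγ' : ∀ t ∈ Set.Icc (0 : ℝ) l, HasDerivAt γ (γ' t) t)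
    (hγ'' : ∀ t ∈ Set.Icc (0 : ℝ) l, HasDerivAt γ' (γ'' t) t)
    (hcont : ContinuousOn γ'' (Set.Icc (0 : ℝ) l))
    (hunit : ∀ t ∈ Set.Icc (0 : ℝ) l, ‖γ' t‖ = 1)
    (hcurv : ∀ t ∈ Set.Icc (0 : ℝ) l, ‖γ'' t‖ ≤ 1 / ρ) :
    ∀ t ∈ Set.Icc (0 : ℝ) l, ⟪γ' t, γ' 0⟫ ≥ 1 - t ^ 2 / (2 * ρ ^ 2) := by
  intro t ht
  obtain ⟨ht0, htl⟩ := ht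
  have h0 : (0 : ℝ) ∈ Set.Icc (0 : ℝ) l := ⟨le_rfl, hl.le⟩
  have htt : t ∈ Set.Icc (0 : ℝ) l := ⟨ht0, htl⟩
  have hkey : ‖γ' t - γ' 0‖ ≤ (1 / ρ) * ‖t - 0‖ := by
    apply (convex_Icc (0 : ℝ) l).norm_image_sub_le_of_norm_hasDerivWithin_le
      (fun x hx => (hγ'' x hx).hasDerivWithinAt) (fun x hx => hcurv x hx) h0 htt
  have hnorm : ‖γ' t - γ' 0‖ ≤ t / ρ := by
    rw [sub_zero, Real.norm_of_nonneg ht0] at hkey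
    calc ‖γ' t - γ' 0‖ ≤ 1 / ρ * t := hkey
    _ = t / ρ := by ring
  have hsq : ‖γ' t - γ' 0‖ ^ 2 ≤ (t / ρ) ^ 2 := by
    apply sq_le_sq' _ hnorm
    have := norm_nonneg (γ' t - γ' 0)
    have : 0 ≤ t / ρ := div_nonneg ht0 hρ.le
    linarith [norm_nonneg (γ' t - γ' 0)]
  have hexp : ‖γ' t - γ' 0‖ ^ 2 = 2 - 2 * ⟪γ' t, γ' 0⟫ := by
    rw [@norm_sub_sq_real, hunit t htt, hunit 0 h0]
    ring
  rw [hexp] at hsq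
  have : (t / ρ) ^ 2 = t ^ 2 / ρ ^ 2 := by ring
  rw [this] at hsq
  have hρ2 : (0:ℝ) < ρ ^ 2 := by positivity
  have h2 : t ^ 2 / (2 * ρ ^ 2) = (t ^ 2 / ρ ^ 2) / 2 := by ring
  rw [ge_iff_le, h2]
  linarith
end

section
/- The projection of the chord onto the initial tangent direction satisfies ⟪γ(l) − γ(0), γ'(0)⟫ ≥ l − l³/(6ρ²). -/
open scoped RealInnerProductSpace

theorem chord_projection_lower_bound
    {E : Type*} [NormedAddCommGroup E] [InnerProductSpace ℝ E]
    (ρ l : ℝ) (hρ : 0 < ρ) (hl : 0 < l)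
    (γ γ' γ'' : ℝ → E)
    (hγ' : ∀ t ∈ Set.Icc (0 : ℝ) l, HasDerivAt γ (γ' t) t)
    (hγ'' : ∀ t ∈ Set.Icc (0 : ℝ) l, HasDerivAt γ' (γ'' t) t)
    (hcont : ContinuousOn γ'' (Set.Icc (0 : ℝ) l))
    (hunit : ∀ t ∈ Set.Icc (0 : ℝ) l, ‖γ' t‖ = 1)
    (hcurv : ∀ t ∈ Set.Icc (0 : ℝ) l, ‖γ'' t‖ ≤ 1 / ρ) :
    ⟪γ l - γ 0, γ' 0⟫ ≥ l - l ^ 3 / (6 * ρ ^ 2) := by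
  set F : ℝ → ℝ := fun t => ⟪γ t, γ' 0⟫ - t + t ^ 3 / (6 * ρ ^ 2) with hF
  have hmem0 : (0 : ℝ) ∈ Set.Icc (0 : ℝ) l := ⟨le_refl _, hl.le⟩
  have hmeml : l ∈ Set.Icc (0 : ℝ) l := ⟨hl.le, le_refl _⟩
  -- ‖γ' t - γ' 0‖ ≤ t / ρ
  have htang : ∀ t ∈ Set.Icc (0 : ℝ) l, ‖γ' t - γ' 0‖ ≤ (1 / ρ) * t := by
    intro t ht
    have := Convex.norm_image_sub_le_of_norm_hasDerivWithin_le
      (f := γ') (f' := γ'') (C := 1 / ρ)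
      (fun x hx => (hγ'' x hx).hasDerivWithinAt) hcurv (convex_Icc 0 l) hmem0 ht
    simpa [abs_of_nonneg ht.1] using this
  -- derivative of F
  have hFderiv : ∀ t ∈ Set.Icc (0 : ℝ) l,
      HasDerivAt F (⟪γ' t, γ' 0⟫ - 1 + t ^ 2 / (2 * ρ ^ 2)) t := by
    intro t ht
    have h1 : HasDerivAt (fun t => ⟪γ t, γ' 0⟫) ⟪γ' t, γ' 0⟫ t := by
      have := (hγ' t ht).inner ℝ (hasDerivAt_const t (γ' 0))
      simpa using this
    have h2 : HasDerivAt (fun t : ℝ => t ^ 3 / (6 * ρ ^ 2)) (t ^ 2 / (2 * ρ ^ 2)) t := by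
      have := (hasDerivAt_pow 3 t).div_const (6 * ρ ^ 2)
      refine this.congr_deriv ?_
      have hρ2 : ρ ^ 2 ≠ 0 := pow_ne_zero 2 hρ.ne'
      rw [div_eq_div_iff (mul_ne_zero (by norm_num) hρ2) (mul_ne_zero two_ne_zero hρ2)]
      simp only [Nat.cast_ofNat, show (3:ℕ) - 1 = 2 from rfl]
      ring
    exact (h1.sub (hasDerivAt_id t)).add h2
  -- derivative nonneg on Icc
  have hnonneg : ∀ t ∈ Set.Icc (0 : ℝ) l,
      0 ≤ ⟪γ' t, γ' 0⟫ - 1 + t ^ 2 / (2 * ρ ^ 2) := by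
    intro t ht
    have h1 : ‖γ' t - γ' 0‖ ≤ (1 / ρ) * t := htang t ht
    have h2 : ‖γ' t - γ' 0‖ ^ 2 = ‖γ' t‖ ^ 2 - 2 * ⟪γ' t, γ' 0⟫ + ‖γ' 0‖ ^ 2 :=
      norm_sub_sq_real _ _
    rw [hunit t ht, hunit 0 hmem0] at h2
    have h3 : ‖γ' t - γ' 0‖ ^ 2 ≤ ((1 / ρ) * t) ^ 2 := by
      have := norm_nonneg (γ' t - γ' 0)
      nlinarith
    rw [h2] at h3
    have h4 : (1 / ρ * t) ^ 2 = t ^ 2 / ρ ^ 2 := by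
      field_simp
    rw [h4] at h3
    have e : t ^ 2 / (2 * ρ ^ 2) = t ^ 2 / ρ ^ 2 / 2 := by ring
    rw [e]
    linarith
  -- F is monotone on Icc
  have hcontF : ContinuousOn F (Set.Icc 0 l) := fun t ht =>
    ((hFderiv t ht).continuousAt).continuousWithinAt
  have hmono : MonotoneOn F (Set.Icc 0 l) := by
    apply monotoneOn_of_deriv_nonneg (convex_Icc 0 l) hcontF
    · intro t ht
      rw [interior_Icc] at ht
      exact (hFderiv t ⟨ht.1.le, ht.2.le⟩).differentiableAt.differentiableWithinAt
    · intro t ht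
      rw [interior_Icc] at ht
      rw [(hFderiv t ⟨ht.1.le, ht.2.le⟩).deriv]
      exact hnonneg t ⟨ht.1.le, ht.2.le⟩
  have := hmono hmem0 hmeml hl.le
  simp only [hF] at this
  rw [inner_sub_left]
  have h0 : (0:ℝ) ^ 3 / (6 * ρ ^ 2) = 0 := by simp
  nlinarith [this]
end

section
/- The chord length satisfies ‖γ(l) − γ(0)‖ ≥ l − l³/(6ρ²); that is, the Euclidean distance between the endpoints of a unit-speed curve of length l with curvature at most 1/ρ is at least l − l³/(6ρ²). -/
open scoped RealInnerProductSpace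

theorem chord_length_lower_bound
    {E : Type*} [NormedAddCommGroup E] [InnerProductSpace ℝ E]
    (ρ l : ℝ) (hρ : 0 < ρ) (hl : 0 < l)
    (γ γ' γ'' : ℝ → E)
    (hγ' : ∀ t ∈ Set.Icc (0 : ℝ) l, HasDerivAt γ (γ' t) t)
    (hγ'' : ∀ t ∈ Set.Icc (0 : ℝ) l, HasDerivAt γ' (γ'' t) t)
    (hcont : ContinuousOn γ'' (Set.Icc (0 : ℝ) l))
    (hunit : ∀ t ∈ Set.Icc (0 : ℝ) l, ‖γ' t‖ = 1)
    (hcurv : ∀ t ∈ Set.Icc (0 : ℝ) l, ‖γ'' t‖ ≤ 1 / ρ) :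
    ‖γ l - γ 0‖ ≥ l - l ^ 3 / (6 * ρ ^ 2) := by
  have h0mem : (0 : ℝ) ∈ Set.Icc (0 : ℝ) l := ⟨le_refl 0, hl.le⟩
  have hlmem : l ∈ Set.Icc (0 : ℝ) l := ⟨hl.le, le_refl l⟩
  -- bound on ‖γ' t - γ' 0‖ from the mean value inequality
  have hlip : ∀ t ∈ Set.Icc (0 : ℝ) l, ‖γ' t - γ' 0‖ ≤ t / ρ := by
    intro t ht
    have := (convex_Icc (0:ℝ) l).norm_image_sub_le_of_norm_hasDerivWithin_le
      (fun x hx => (hγ'' x hx).hasDerivWithinAt)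
      (fun x hx => hcurv x hx) h0mem ht
    calc ‖γ' t - γ' 0‖ ≤ 1 / ρ * ‖t - 0‖ := this
      _ = t / ρ := by rw [sub_zero, Real.norm_of_nonneg ht.1]; ring
  -- pointwise inner product bound
  have hinner : ∀ t ∈ Set.Icc (0 : ℝ) l,
      1 - t ^ 2 / (2 * ρ ^ 2) ≤ ⟪γ' 0, γ' t⟫ := by
    intro t ht
    have hn : ‖γ' t - γ' 0‖ ^ 2 ≤ t ^ 2 / ρ ^ 2 := by
      have h2 : ‖γ' t - γ' 0‖ ^ 2 ≤ (t / ρ) ^ 2 :=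
        pow_le_pow_left₀ (norm_nonneg _) (hlip t ht) 2
      calc ‖γ' t - γ' 0‖ ^ 2 ≤ (t / ρ) ^ 2 := h2
        _ = t ^ 2 / ρ ^ 2 := by ring
    have hexp : ‖γ' t - γ' 0‖ ^ 2 = 2 - 2 * ⟪γ' 0, γ' t⟫ := by
      have := @norm_sub_sq_real E _ _ (γ' t) (γ' 0)
      rw [hunit t ht, hunit 0 h0mem] at this
      rw [this, real_inner_comm]
      ring
    rw [hexp] at hn
    have hρ2 : (0:ℝ) < ρ ^ 2 := by positivity
    have h3 : (2 - 2 * ⟪γ' 0, γ' t⟫) * ρ ^ 2 ≤ t ^ 2 := (le_div_iff₀ hρ2).mp hn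
    rw [sub_le_iff_le_add, ← sub_le_iff_le_add', le_div_iff₀ (by positivity : (0:ℝ) < 2 * ρ ^ 2)]
    nlinarith
  -- the auxiliary function h(t) = ⟪γ'(0), γ(t)⟫ - (t - t³/(6ρ²)) is monotone on [0, l]
  set c : E := γ' 0 with hc
  set h : ℝ → ℝ := fun t => ⟪c, γ t⟫ - (t - t ^ 3 / (6 * ρ ^ 2)) with hh
  have hγcont : ContinuousOn γ (Set.Icc (0 : ℝ) l) := fun t ht =>
    (hγ' t ht).continuousAt.continuousWithinAt
  have hhcont : ContinuousOn h (Set.Icc (0 : ℝ) l) := by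
    apply ContinuousOn.sub
    · exact (innerSL ℝ c).continuous.comp_continuousOn hγcont
    · fun_prop
  have hderiv : ∀ t ∈ Set.Icc (0 : ℝ) l,
      HasDerivAt h (⟪c, γ' t⟫ - (1 - t ^ 2 / (2 * ρ ^ 2))) t := by
    intro t ht
    have h1 : HasDerivAt (fun s => ⟪c, γ s⟫) (⟪c, γ' t⟫) t := by
      have := (hasDerivAt_const t c).inner ℝ (hγ' t ht)
      simpa using this
    have h2 : HasDerivAt (fun s : ℝ => s - s ^ 3 / (6 * ρ ^ 2))
        (1 - (3 : ℕ) * t ^ 2 / (6 * ρ ^ 2)) t :=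
      (hasDerivAt_id t).sub ((hasDerivAt_pow 3 t).div_const (6 * ρ ^ 2))
    have h2' : HasDerivAt (fun s : ℝ => s - s ^ 3 / (6 * ρ ^ 2))
        (1 - t ^ 2 / (2 * ρ ^ 2)) t := by
      convert h2 using 1
      push_cast
      ring
    exact h1.sub h2'
  have hmono : MonotoneOn h (Set.Icc (0 : ℝ) l) := by
    apply monotoneOn_of_hasDerivWithinAt_nonneg (convex_Icc 0 l) hhcont
      (f' := fun t => ⟪c, γ' t⟫ - (1 - t ^ 2 / (2 * ρ ^ 2)))
    · intro x hx
      exact ((hderiv x (interior_subset hx)).hasDerivWithinAt).mono interior_subset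
    · intro x hx
      rw [interior_Icc] at hx
      have := hinner x ⟨hx.1.le, hx.2.le⟩
      linarith
  have hkey : h 0 ≤ h l := hmono h0mem hlmem (le_of_lt hl)
  have hineq : l - l ^ 3 / (6 * ρ ^ 2) ≤ ⟪c, γ l - γ 0⟫ := by
    rw [inner_sub_right]
    simp only [hh] at hkey
    have : (0:ℝ) - (0 - 0 ^ 3 / (6 * ρ ^ 2)) = 0 := by ring
    nlinarith [hkey]
  have hcs : ⟪c, γ l - γ 0⟫ ≤ ‖γ l - γ 0‖ := by
    calc ⟪c, γ l - γ 0⟫ ≤ ‖c‖ * ‖γ l - γ 0‖ := real_inner_le_norm _ _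
      _ = ‖γ l - γ 0‖ := by rw [hc, hunit 0 h0mem, one_mul]
  linarith
end

section
/- Set d = ‖γ(l) − γ(0)‖, the Euclidean distance between the endpoints of γ. If moreover l ≤ 2d, then l ≤ d + 4d³/(3ρ²); equivalently, l ≤ (1 + 4d²/(3ρ²))·d. (This is the analytic content of the statement that if two points p, q on a manifold M of reach ρ satisfy ‖p−q‖ ≤ ρ/2, then their geodesic distance d_M(p,q) is at most (1 + 4‖p−q‖²/(3ρ²))·‖p−q‖, applied to a minimizing geodesic γ parameterized by arclength, whose curvature is bounded by 1/ρ and whose length l satisfies l ≤ 2‖p−q‖.) -/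
open scoped RealInnerProductSpace

theorem geodesic_vs_euclidean_length
    {E : Type*} [NormedAddCommGroup E] [InnerProductSpace ℝ E]
    (ρ l : ℝ) (hρ : 0 < ρ) (hl : 0 < l)
    (γ γ' γ'' : ℝ → E)
    (hγ' : ∀ t ∈ Set.Icc (0 : ℝ) l, HasDerivAt γ (γ' t) t)
    (hγ'' : ∀ t ∈ Set.Icc (0 : ℝ) l, HasDerivAt γ' (γ'' t) t)
    (hcont : ContinuousOn γ'' (Set.Icc (0 : ℝ) l))
    (hunit : ∀ t ∈ Set.Icc (0 : ℝ) l, ‖γ' t‖ = 1)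
    (hcurv : ∀ t ∈ Set.Icc (0 : ℝ) l, ‖γ'' t‖ ≤ 1 / ρ)
    (d : ℝ) (hd : d = ‖γ l - γ 0‖) (hld : l ≤ 2 * d) :
    l ≤ d + 4 * d ^ 3 / (3 * ρ ^ 2) := by
  have h0 : (0 : ℝ) ∈ Set.Icc (0 : ℝ) l := ⟨le_refl _, hl.le⟩
  have hlmem : l ∈ Set.Icc (0 : ℝ) l := ⟨hl.le, le_refl _⟩
  -- Lipschitz bound on γ'
  have hlip : ∀ x ∈ Set.Icc (0 : ℝ) l, ‖γ' x - γ' 0‖ ≤ x / ρ := by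
    intro x hx
    have := (convex_Icc (0:ℝ) l).norm_image_sub_le_of_norm_hasDerivWithin_le
      (f := γ') (f' := γ'') (C := 1/ρ)
      (fun t ht => (hγ'' t ht).hasDerivWithinAt) hcurv h0 hx
    have hxnn : (0:ℝ) ≤ x := hx.1
    calc ‖γ' x - γ' 0‖ ≤ 1/ρ * ‖x - 0‖ := this
      _ = x / ρ := by rw [sub_zero, Real.norm_of_nonneg hxnn]; ring
  -- inner product lower bound
  have hinner : ∀ x ∈ Set.Icc (0 : ℝ) l, 1 - x^2/(2*ρ^2) ≤ ⟪γ' 0, γ' x⟫ := by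
    intro x hx
    have h1 := hlip x hx
    have h2 : ‖γ' x - γ' 0‖^2 = ‖γ' x‖^2 - 2 * ⟪γ' x, γ' 0⟫ + ‖γ' 0‖^2 :=
      norm_sub_sq_real _ _
    rw [hunit x hx, hunit 0 h0] at h2
    have hsym : ⟪γ' 0, γ' x⟫ = ⟪γ' x, γ' 0⟫ := real_inner_comm _ _
    have hnn : (0:ℝ) ≤ ‖γ' x - γ' 0‖ := norm_nonneg _
    have hxnn : (0:ℝ) ≤ x := hx.1
    have hsq : ‖γ' x - γ' 0‖^2 ≤ (x/ρ)^2 := pow_le_pow_left₀ hnn h1 2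
    rw [div_pow] at hsq
    have hhalf : x^2/(2*ρ^2) = (x^2/ρ^2)/2 := by ring
    linarith
  -- the auxiliary function
  set f : ℝ → ℝ := fun t => ⟪γ' 0, γ t⟫ - (t - t^3/(6*ρ^2)) with hf
  have hfderiv : ∀ t ∈ Set.Icc (0:ℝ) l,
      HasDerivAt f (⟪γ' 0, γ' t⟫ - (1 - t^2/(2*ρ^2))) t := by
    intro t ht
    have h1 : HasDerivAt (fun t => ⟪γ' 0, γ t⟫) (⟪γ' 0, γ' t⟫ + ⟪(0:E), γ t⟫) t :=
      (hasDerivAt_const t (γ' 0)).inner ℝ (hγ' t ht)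
    have h2 : HasDerivAt (fun t : ℝ => t - t^3/(6*ρ^2)) (1 - t^2/(2*ρ^2)) t := by
      have : HasDerivAt (fun t : ℝ => t - t^3/(6*ρ^2)) _ t := ((hasDerivAt_id t).sub (((hasDerivAt_pow 3 t)).div_const (6*ρ^2)))
      convert this using 1
      norm_num
      ring
    have h3 := h1.sub h2
    simp only [inner_zero_left, add_zero] at h3
    exact h3
  have hmono : MonotoneOn f (Set.Icc (0:ℝ) l) := by
    apply monotoneOn_of_hasDerivWithinAt_nonneg (convex_Icc 0 l)
      (f' := fun t => ⟪γ' 0, γ' t⟫ - (1 - t^2/(2*ρ^2)))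
    · intro t ht
      exact (hfderiv t ht).continuousAt.continuousWithinAt
    · intro t ht
      have ht' : t ∈ Set.Icc (0:ℝ) l := interior_subset ht
      exact (hfderiv t ht').hasDerivWithinAt
    · intro t ht
      have ht' : t ∈ Set.Icc (0:ℝ) l := interior_subset ht
      have := hinner t ht'
      linarith
  have key := hmono h0 hlmem hl.le
  simp only [hf] at key
  have hinner_sub : ⟪γ' 0, γ l⟫ - ⟪γ' 0, γ 0⟫ = ⟪γ' 0, γ l - γ 0⟫ := by
    rw [inner_sub_right]
  have hcs : ⟪γ' 0, γ l - γ 0⟫ ≤ d := by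
    calc ⟪γ' 0, γ l - γ 0⟫ ≤ ‖γ' 0‖ * ‖γ l - γ 0‖ := real_inner_le_norm _ _
      _ = d := by rw [hunit 0 h0, hd, one_mul]
  -- so l - l^3/(6ρ^2) ≤ d
  have hmain : l - l^3/(6*ρ^2) ≤ d := by
    have : l - l^3/(6*ρ^2) ≤ ⟪γ' 0, γ l⟫ - ⟪γ' 0, γ 0⟫ := by
      have h00 : (0:ℝ)^3 / (6*ρ^2) = 0 := by simp
      nlinarith [key]
    rw [hinner_sub] at this
    linarith
  -- conclude
  have hd0 : 0 < d := by linarith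
  have hcube : l^3 ≤ (2*d)^3 := by
    have := pow_le_pow_left₀ hl.le hld 3
    simpa using this
  have hρ2 : 0 < ρ^2 := by positivity
  have : l^3/(6*ρ^2) ≤ 4*d^3/(3*ρ^2) := by
    rw [div_le_div_iff₀ (by positivity) (by positivity)]
    nlinarith
  linarith
end

section
/- Let X be a metric space, let ε > 0 and r > 2ε, and let ℓ > r − 2ε. Let g : ℝ → X be 1-Lipschitz on [0, ℓ] with g(0) = g(ℓ) (a closed curve of length at most ℓ parameterized by arclength), and let P ⊆ X be such that for every t ∈ [0, ℓ] there exists p ∈ P with dist(g(t), p) < ε. Then there exist an integer m ≥ 2 and points p₀, p₁, …, p_m ∈ P with p_m = p₀ such that dist(p_i, p_{i+1}) < r for every 0 ≤ i < m, and the total length satisfies Σ_{i=0}^{m−1} dist(p_i, p_{i+1}) ≤ (r/(r − 2ε))·ℓ + 2ε. (In particular, consecutive points are joined by edges of the Čech complex Čech^r(P), so the polygonal loop p₀p₁…p_m lies in the 1-skeleton of Čech^r(P).) -/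
theorem decomposition_method
    {X : Type*} [MetricSpace X]
    (ε r ℓ : ℝ) (hε : 0 < ε) (hr : 2 * ε < r) (hℓ : r - 2 * ε < ℓ)
    (g : ℝ → X) (hlip : LipschitzOnWith 1 g (Set.Icc 0 ℓ))
    (hclosed : g 0 = g ℓ)
    (P : Set X)
    (hsample : ∀ t ∈ Set.Icc (0 : ℝ) ℓ, ∃ p ∈ P, dist (g t) p < ε) :
    ∃ (m : ℕ) (p : ℕ → X), 2 ≤ m ∧
      (∀ i ≤ m, p i ∈ P) ∧
      p m = p 0 ∧
      (∀ i < m, dist (p i) (p (i + 1)) < r) ∧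
      (∑ i ∈ Finset.range m, dist (p i) (p (i + 1))) ≤ r / (r - 2 * ε) * ℓ + 2 * ε := by
  set δ := r - 2 * ε with hδdef
  have hδ : 0 < δ := by simp [hδdef]; linarith
  have hℓ0 : 0 < ℓ := lt_trans hδ hℓ
  set m : ℕ := ⌈ℓ / δ⌉₊ with hmdef
  have hratio : 1 < ℓ / δ := (one_lt_div hδ).2 hℓ
  have hm2 : 2 ≤ m := by
    have : (1:ℕ) < m := Nat.lt_ceil.2 (by push_cast; exact hratio)
    omega
  have hm0 : (0 : ℝ) < m := by positivity
  have hmle : ℓ / δ ≤ m := Nat.le_ceil _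
  have hstep : ℓ / m ≤ δ := by
    rw [div_le_iff₀ hm0]
    calc ℓ = (ℓ / δ) * δ := by field_simp
    _ ≤ m * δ := by nlinarith
    _ = δ * m := mul_comm _ _
  have hmub : (m : ℝ) ≤ ℓ / δ + 1 := by
    have := Nat.ceil_lt_add_one (show (0:ℝ) ≤ ℓ / δ by positivity)
    exact le_of_lt this
  -- define t i
  set t : ℕ → ℝ := fun i => min (i * ℓ / m) ℓ with htdef
  have htmem : ∀ i : ℕ, t i ∈ Set.Icc (0:ℝ) ℓ := by
    intro i
    constructor
    · apply le_min (by positivity) hℓ0.le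
    · exact min_le_right _ _
  have hteq : ∀ i : ℕ, i ≤ m → t i = i * ℓ / m := by
    intro i hi
    apply min_eq_left
    rw [div_le_iff₀ hm0]
    have : (i : ℝ) ≤ m := by exact_mod_cast hi
    nlinarith
  choose q hqP hqd using fun i : ℕ => hsample (t i) (htmem i)
  set p : ℕ → X := fun i => if i = m then q 0 else q i with hpdef
  have hp0 : p 0 = q 0 := by
    have h02 : (0:ℕ) ≠ m := by omega
    simp [hpdef, h02]
  have hpm : p m = q 0 := by simp [hpdef]
  have ht0 : t 0 = 0 := by simp [htdef, hℓ0.le]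
  have htm : t m = ℓ := by
    rw [hteq m le_rfl]; field_simp
  have hkey : ∀ i ≤ m, dist (g (t i)) (p i) < ε := by
    intro i hi
    by_cases h : i = m
    · subst h
      rw [hpm, htm, ← hclosed, ← ht0]
      exact hqd 0
    · simp only [hpdef, if_neg h]
      exact hqd i
  have hdist : ∀ i < m, dist (p i) (p (i+1)) < ℓ / m + 2 * ε := by
    intro i hi
    have h1 : dist (g (t i)) (p i) < ε := hkey i hi.le
    have h2 : dist (g (t (i+1))) (p (i+1)) < ε := hkey (i+1) hi
    have h3 : dist (g (t i)) (g (t (i+1))) ≤ ℓ / m := by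
      have hl := hlip.dist_le_mul (t i) (htmem i) (t (i+1)) (htmem (i+1))
      rw [hteq i hi.le, hteq (i+1) hi] at hl
      have heq : dist ((i:ℝ) * ℓ / m) (((i:ℕ)+1 : ℕ) * ℓ / m) = ℓ / m := by
        rw [Real.dist_eq]
        push_cast
        rw [abs_of_nonpos (by rw [sub_nonpos]; apply div_le_div_of_nonneg_right _ hm0.le; nlinarith)]
        ring
      rw [hteq i hi.le, hteq (i+1) hi]
      calc dist (g ((i:ℝ) * ℓ / m)) (g (((i:ℕ)+1:ℕ) * ℓ / m))
          ≤ 1 * dist ((i:ℝ) * ℓ / m) (((i:ℕ)+1:ℕ) * ℓ / m) := by exact_mod_cast hl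
        _ = ℓ / m := by rw [one_mul, heq]
    calc dist (p i) (p (i+1)) ≤ dist (p i) (g (t i)) + dist (g (t i)) (g (t (i+1))) + dist (g (t (i+1))) (p (i+1)) := dist_triangle4 _ _ _ _
      _ < ε + ℓ / m + ε := by
          rw [dist_comm (p i)]
          linarith
      _ = ℓ / m + 2 * ε := by ring
  refine ⟨m, p, hm2, ?_, by rw [hpm, hp0], ?_, ?_⟩
  · intro i hi
    by_cases h : i = m
    · subst h; rw [hpm]; exact hqP 0
    · simp only [hpdef, if_neg h]; exact hqP i
  · intro i hi
    have := hdist i hi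
    have : ℓ / m + 2 * ε ≤ δ + 2 * ε := by linarith
    simp only [hδdef] at this
    linarith [hdist i hi]
  · calc (∑ i ∈ Finset.range m, dist (p i) (p (i + 1)))
        ≤ ∑ i ∈ Finset.range m, (ℓ / m + 2 * ε) := by
          apply Finset.sum_le_sum
          intro i hi
          exact (hdist i (Finset.mem_range.1 hi)).le
    _ = m * (ℓ / m + 2 * ε) := by rw [Finset.sum_const, Finset.card_range]; ring
    _ = ℓ + 2 * ε * m := by rw [mul_add, mul_div_cancel₀ _ (ne_of_gt hm0)]; ring
    _ ≤ ℓ + 2 * ε * (ℓ / δ + 1) := by nlinarith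
    _ = r / δ * ℓ + 2 * ε := by
        have : r = δ + 2 * ε := by rw [hδdef]; ring
        rw [this]; field_simp; ring
end

section
/- Let F be a field, V a vector space over F, n a natural number, v : Fin n → V a finite sequence of vectors, and w : Fin n → ℝ a weight function with w(i) ≥ 0 for all i and w nondecreasing (the vectors are listed in order of nondecreasing weight). Let G ⊆ Fin n be the greedy set, i.e. the unique subset such that for every i, i ∈ G if and only if v(i) does not lie in the span of { v(j) : j ∈ G, j < i }. Then the family (v(i))_{i ∈ G} is a basis of the span of { v(0), …, v(n−1) }, and for every subset I ⊆ Fin n such that (v(i))_{i ∈ I} is linearly independent and spans the span of { v(0), …, v(n−1) }, one has Σ_{i ∈ G} w(i) ≤ Σ_{i ∈ I} w(i). In other words, the greedy set is a minimum-weight basis of the span, among all bases chosen from the given family. -/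
open Submodule

-- sum over a sorted finset
lemma sum_via_orderEmbOfFin {α : Type*} [LinearOrder α] (s : Finset α) {k : ℕ} (h : s.card = k)
    (f : α → ℝ) : ∑ i ∈ s, f i = ∑ t : Fin k, f (s.orderEmbOfFin h t) := by
  have himg : Finset.image (s.orderEmbOfFin h) Finset.univ = s := by
    apply Finset.coe_injective
    simp [Finset.coe_image]
  conv_lhs => rw [← himg]
  rw [Finset.sum_image (by intro x _ y _ hxy; exact (s.orderEmbOfFin h).injective hxy)]

lemma orderEmbOfFin_le_of_card_lt {α : Type*} [LinearOrder α] (s : Finset α) {k : ℕ}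
    (h : s.card = k) (t : Fin k) (m : α)
    (hc : (t : ℕ) < (s.filter (· ≤ m)).card) : s.orderEmbOfFin h t ≤ m := by
  by_contra hlt
  push_neg at hlt
  classical
  have hle : (s.filter (· ≤ m)).card ≤ (Finset.range (t : ℕ)).card := by
    apply Finset.card_le_card_of_injOn
      (fun x => if hx : x ∈ s then (((s.orderIsoOfFin h).symm ⟨x, hx⟩ : Fin k) : ℕ) else 0)
    · intro x hx
      rw [Finset.mem_coe, Finset.mem_filter] at hx
      obtain ⟨hxs, hxm⟩ := hx
      simp only [Finset.mem_coe]; rw [dif_pos hxs, Finset.mem_range]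
      set j := (s.orderIsoOfFin h).symm ⟨x, hxs⟩ with hj
      have hjx : s.orderEmbOfFin h j = x := by
        have := (s.orderIsoOfFin h).apply_symm_apply ⟨x, hxs⟩
        have : ((s.orderIsoOfFin h) j : α) = x := by rw [hj, this]
        rwa [← Finset.coe_orderIsoOfFin_apply]
      have : s.orderEmbOfFin h j < s.orderEmbOfFin h t := by
        rw [hjx]; exact lt_of_le_of_lt hxm hlt
      exact (s.orderEmbOfFin h).strictMono.lt_iff_lt.mp this
    · intro x hx y hy hxy
      rw [Finset.mem_coe, Finset.mem_filter] at hx hy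
      simp only [dif_pos hx.1, dif_pos hy.1] at hxy
      have : (s.orderIsoOfFin h).symm ⟨x, hx.1⟩ = (s.orderIsoOfFin h).symm ⟨y, hy.1⟩ :=
        Fin.val_injective hxy
      have := (s.orderIsoOfFin h).symm.injective this
      exact congrArg Subtype.val this
  rw [Finset.card_range] at hle
  omega

lemma lt_card_filter_le_orderEmbOfFin {α : Type*} [LinearOrder α] (s : Finset α) {k : ℕ}
    (h : s.card = k) (t : Fin k) :
    (t : ℕ) < (s.filter (· ≤ s.orderEmbOfFin h t)).card := by
  classical
  have hle : (Finset.range ((t : ℕ) + 1)).card ≤ (s.filter (· ≤ s.orderEmbOfFin h t)).card := by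
    apply Finset.card_le_card_of_injOn
      (fun j => if hj : j < k then s.orderEmbOfFin h ⟨j, hj⟩ else s.orderEmbOfFin h t)
    · intro j hj
      rw [Finset.mem_coe, Finset.mem_range] at hj
      have hjk : j < k := lt_of_lt_of_le hj t.2
      simp only [dif_pos hjk, Finset.mem_coe]
      refine Finset.mem_filter.mpr ⟨Finset.orderEmbOfFin_mem s h _, ?_⟩
      exact (s.orderEmbOfFin h).monotone (Fin.le_def.mpr (by simp only [Fin.val_mk]; omega))
    · intro x hx y hy hxy
      rw [Finset.mem_coe, Finset.mem_range] at hx hy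
      have hxk : x < k := lt_of_lt_of_le hx t.2
      have hyk : y < k := lt_of_lt_of_le hy t.2
      simp only [dif_pos hxk, dif_pos hyk] at hxy
      have := (s.orderEmbOfFin h).injective hxy
      exact congrArg Fin.val this
  rw [Finset.card_range] at hle
  omega

lemma range_restrict_eq_image {n : ℕ} {V : Type*} (v : Fin n → V) (A : Finset (Fin n)) :
    Set.range (fun i : {x // x ∈ A} => v i) = v '' ↑A := by
  ext x
  simp [Set.mem_image, Subtype.exists]

lemma indep_of_subset {F : Type*} [Field F] {V : Type*} [AddCommGroup V] [Module F V]
    {n : ℕ} {v : Fin n → V} {s A : Finset (Fin n)} (hA : A ⊆ s)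
    (hs : LinearIndependent F (fun i : {x // x ∈ s} => v i)) :
    LinearIndependent F (fun i : {x // x ∈ A} => v i) := by
  refine hs.comp (fun i : {x // x ∈ A} => (⟨i.1, hA i.2⟩ : {x // x ∈ s})) ?_
  intro a b hab
  simp only [Subtype.mk.injEq] at hab
  exact Subtype.ext hab

theorem greedy_set_is_min_weight_basis
    {F : Type*} [Field F] {V : Type*} [AddCommGroup V] [Module F V]
    (n : ℕ) (v : Fin n → V) (w : Fin n → ℝ)
    (hw0 : ∀ i, 0 ≤ w i) (hwmono : Monotone w)
    (G : Finset (Fin n))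
    (hG : ∀ i, i ∈ G ↔ v i ∉ Submodule.span F (v '' {j | j ∈ G ∧ j < i})) :
    (LinearIndependent F (fun i : {x // x ∈ G} => v i) ∧
      Submodule.span F (v '' ↑G) = Submodule.span F (Set.range v)) ∧
    ∀ I : Finset (Fin n),
      LinearIndependent F (fun i : {x // x ∈ I} => v i) →
      Submodule.span F (v '' ↑I) = Submodule.span F (Set.range v) →
      ∑ i ∈ G, w i ≤ ∑ i ∈ I, w i := by
  classical
  -- injectivity of v on G
  have hinj : Set.InjOn v ↑G := by
    have key : ∀ i ∈ G, ∀ j ∈ G, i < j → v i ≠ v j := by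
      intro i hi j hj hij heq
      have : v j ∈ span F (v '' {l | l ∈ G ∧ l < j}) := by
        rw [← heq]; exact subset_span ⟨i, ⟨hi, hij⟩, rfl⟩
      exact ((hG j).mp hj) this
    intro i hi j hj heq
    rcases lt_trichotomy i j with h | h | h
    · exact absurd heq (key i hi j hj h)
    · exact h
    · exact absurd heq.symm (key j hj i hi h)
  -- set independence by induction
  have setIndep : ∀ H : Finset (Fin n),
      (∀ i ∈ H, v i ∉ span F (v '' {j | j ∈ H ∧ j < i})) →
      LinearIndependent F (fun x : ((v '' ↑H) : Set V) => (x : V)) := by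
    intro H
    induction H using Finset.strongInduction with
    | _ H ih =>
      intro hH
      rcases H.eq_empty_or_nonempty with rfl | hne
      · rw [Finset.coe_empty, Set.image_empty]
        exact linearIndependent_empty F V
      · set m := H.max' hne with hm
        set H' := H.erase m with hH'
        have hss : H' ⊂ H := Finset.erase_ssubset (H.max'_mem hne)
        have hmem' : ∀ i ∈ H', i ∈ H ∧ i < m := by
          intro i hi
          have h1 : i ∈ H := Finset.mem_of_mem_erase hi
          have h2 : i ≠ m := Finset.ne_of_mem_erase hi
          exact ⟨h1, lt_of_le_of_ne (H.le_max' i h1) h2⟩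
        have hsetm : {j | j ∈ H ∧ j < m} = (↑H' : Set (Fin n)) := by
          ext j
          simp only [Set.mem_setOf_eq, hH', Finset.coe_erase, Set.mem_diff,
            Finset.mem_coe, Set.mem_singleton_iff]
          constructor
          · rintro ⟨hj, hjm⟩; exact ⟨hj, ne_of_lt hjm⟩
          · rintro ⟨hj, hjm⟩
            exact ⟨hj, lt_of_le_of_ne (H.le_max' j hj) hjm⟩
        have hvm : v m ∉ span F (v '' ↑H') := by
          have := hH m (H.max'_mem hne)
          rwa [hsetm] at this
        have hH'hyp : ∀ i ∈ H', v i ∉ span F (v '' {j | j ∈ H' ∧ j < i}) := by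
          intro i hi
          have hset : {j | j ∈ H' ∧ j < i} = {j | j ∈ H ∧ j < i} := by
            ext j
            simp only [Set.mem_setOf_eq]
            constructor
            · rintro ⟨hj, hji⟩; exact ⟨(hmem' j hj).1, hji⟩
            · rintro ⟨hj, hji⟩
              refine ⟨Finset.mem_erase.mpr ⟨?_, hj⟩, hji⟩
              exact ne_of_lt (lt_trans hji (hmem' i hi).2)
          rw [hset]
          exact hH i (hmem' i hi).1
        have ihH' := ih H' hss hH'hyp
        have hins := LinearIndepOn.id_insert (K := F) ihH' hvm
        have himg : (v '' ↑H : Set V) = insert (v m) (v '' ↑H') := by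
          conv_lhs => rw [← Finset.insert_erase (H.max'_mem hne)]
          rw [Finset.coe_insert, Set.image_insert_eq]
        rw [himg]
        exact hins
  have hGindep : LinearIndependent F (fun i : {x // x ∈ G} => v i) := by
    have hset := setIndep G (fun i hi => (hG i).mp hi)
    exact (linearIndepOn_iff_image hinj).mpr hset
  -- claim A: every vector is in the span of greedy vectors with index ≤ i
  have claimA : ∀ i, v i ∈ span F (v '' {j | j ∈ G ∧ j ≤ i}) := by
    intro i
    by_cases hi : i ∈ G
    · exact subset_span ⟨i, ⟨hi, le_refl i⟩, rfl⟩
    · have h1 : v i ∈ span F (v '' {j | j ∈ G ∧ j < i}) := by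
        by_contra h; exact hi ((hG i).mpr h)
      refine span_mono (Set.image_mono (f := v) ?_) h1
      rintro j ⟨hj, hji⟩; exact ⟨hj, le_of_lt hji⟩
  have hGspan : span F (v '' ↑G) = span F (Set.range v) := by
    apply le_antisymm
    · exact span_mono (Set.image_subset_range v ↑G)
    · rw [span_le]
      rintro _ ⟨i, rfl⟩
      refine span_mono (Set.image_mono (f := v) ?_) (claimA i)
      rintro j ⟨hj, _⟩; exact hj
  refine ⟨⟨hGindep, hGspan⟩, ?_⟩
  -- part 2
  intro I hIindep hIspan
  -- finrank facts
  have finrank_eq : ∀ A : Finset (Fin n),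
      LinearIndependent F (fun i : {x // x ∈ A} => v i) →
      Module.finrank F (span F (v '' ↑A)) = A.card := by
    intro A hA
    have := finrank_span_eq_card (R := F) hA
    rwa [range_restrict_eq_image, Fintype.card_coe] at this
  -- prefix rank comparison
  have prefix_card : ∀ m : Fin n,
      (I.filter (· ≤ m)).card ≤ (G.filter (· ≤ m)).card := by
    intro m
    set A := G.filter (· ≤ m) with hA
    set B := I.filter (· ≤ m) with hB
    have hAG : A ⊆ G := Finset.filter_subset _ _
    have hBI : B ⊆ I := Finset.filter_subset _ _
    have hAindep := indep_of_subset hAG hGindep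
    have hBindep := indep_of_subset hBI hIindep
    haveI : Module.Finite F (span F (v '' ↑A)) :=
      FiniteDimensional.span_of_finite F ((A : Set (Fin n)).toFinite.image v)
    have hspanle : span F (v '' ↑B) ≤ span F (v '' ↑A) := by
      rw [span_le]
      rintro _ ⟨i, hi, rfl⟩
      rw [Finset.mem_coe, hB, Finset.mem_filter] at hi
      have h1 := claimA i
      have h2 : {j | j ∈ G ∧ j ≤ i} ⊆ (↑A : Set (Fin n)) := by
        rintro j ⟨hj, hji⟩
        rw [Finset.mem_coe, hA, Finset.mem_filter]
        exact ⟨hj, le_trans hji hi.2⟩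
      exact span_mono (Set.image_mono (f := v) h2) h1
    calc B.card = Module.finrank F (span F (v '' ↑B)) := (finrank_eq B hBindep).symm
      _ ≤ Module.finrank F (span F (v '' ↑A)) := Submodule.finrank_mono hspanle
      _ = A.card := finrank_eq A hAindep
  -- equal cardinalities
  have hcard : I.card = G.card := by
    have h1 := finrank_eq G hGindep
    have h2 := finrank_eq I hIindep
    rw [hGspan] at h1
    rw [hIspan] at h2
    omega
  set k := G.card with hk
  have hGk : G.card = k := rfl
  have hIk : I.card = k := hcard
  rw [sum_via_orderEmbOfFin G hGk w, sum_via_orderEmbOfFin I hIk w]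
  apply Finset.sum_le_sum
  intro t _
  apply hwmono
  apply orderEmbOfFin_le_of_card_lt G hGk t (I.orderEmbOfFin hIk t)
  calc (t : ℕ) < (I.filter (· ≤ I.orderEmbOfFin hIk t)).card :=
        lt_card_filter_le_orderEmbOfFin I hIk t
    _ ≤ (G.filter (· ≤ I.orderEmbOfFin hIk t)).card := prefix_card _
end

section
/- Let F be a field (in the application F = ℤ₂) and V a finite-dimensional vector space over F. Let S be a finite set, and let v : S → V and w : S → ℝ with w(s) ≥ 0 for all s ∈ S; fix a linear order ≼ on S that refines the weights, i.e. s ≼ t implies w(s) ≤ w(t). For a subset C ⊆ S, define greedy(C) ⊆ C as the unique subset such that for every s ∈ C, s ∈ greedy(C) if and only if v(s) does not lie in the span of { v(t) : t ∈ greedy(C), t ≺ s }. Let (C_p)_{p ∈ Q} be a finite family of subsets of S. Suppose there exists a subset B ⊆ ⋃_{p ∈ Q} C_p such that (v(b))_{b ∈ B} is a basis of V and Σ_{b ∈ B} w(b) is minimal among all subsets of S whose images under v form a basis of V. Then there exists a subset B' ⊆ ⋃_{p ∈ Q} greedy(C_p) such that (v(b))_{b ∈ B'} is a basis of V and Σ_{b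 ∈ B'} w(b) equals that same minimum. In other words, replacing each set C_p by its greedy subset greedy(C_p) preserves the existence of a minimum-weight basis in the union. -/
theorem aux_not_mem_span {F : Type*} [Field F] {V : Type*} [AddCommGroup V] [Module F V]
    {S : Type*} (v : S → V) {A : Finset S}
    (h : LinearIndependent F (fun x : {x // x ∈ A} => v x))
    {b : S} (hb : b ∈ A) :
    v b ∉ Submodule.span F (v '' ((↑A : Set S) \ {b})) := by
  have := h.notMem_span_image (s := {x : {x // x ∈ A} | (x : S) ≠ b}) (x := ⟨b, hb⟩)
    (by simp)
  convert this using 3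
  ext y
  constructor
  · rintro ⟨t, ⟨htA, htb⟩, rfl⟩
    exact ⟨⟨t, htA⟩, htb, rfl⟩
  · rintro ⟨⟨t, htA⟩, htb, rfl⟩
    exact ⟨t, ⟨htA, htb⟩, rfl⟩

theorem aux_injOn {F : Type*} [Field F] {V : Type*} [AddCommGroup V] [Module F V]
    {S : Type*} (v : S → V) {A : Finset S}
    (h : LinearIndependent F (fun x : {x // x ∈ A} => v x)) :
    Set.InjOn v (↑A : Set S) := by
  intro x hx y hy hxy
  have := h.injective (a₁ := ⟨x, hx⟩) (a₂ := ⟨y, hy⟩) hxy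
  exact congrArg Subtype.val this

theorem greedy_subsets_preserve_min_weight_basis
    {F : Type*} [Field F] {V : Type*} [AddCommGroup V] [Module F V]
    [FiniteDimensional F V]
    {S : Type*} [Fintype S] [LinearOrder S]
    (v : S → V) (w : S → ℝ)
    (hw0 : ∀ s, 0 ≤ w s)
    (hle : ∀ s t : S, s ≤ t → w s ≤ w t)
    (greedy : Set S → Set S)
    (hgreedy_sub : ∀ C : Set S, greedy C ⊆ C)
    (hgreedy : ∀ (C : Set S), ∀ s ∈ C,
      (s ∈ greedy C ↔ v s ∉ Submodule.span F (v '' {t | t ∈ greedy C ∧ t < s})))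
    {Q : Type*} [Fintype Q] (C : Q → Set S)
    (B : Finset S)
    (hBsub : (↑B : Set S) ⊆ ⋃ p, C p)
    (hBindep : LinearIndependent F (fun b : {x // x ∈ B} => v b))
    (hBspan : Submodule.span F (v '' ↑B) = ⊤)
    (hBmin : ∀ B₂ : Finset S,
      LinearIndependent F (fun b : {x // x ∈ B₂} => v b) →
      Submodule.span F (v '' ↑B₂) = ⊤ →
      ∑ b ∈ B, w b ≤ ∑ b ∈ B₂, w b) :
    ∃ B' : Finset S, (↑B' : Set S) ⊆ (⋃ p, greedy (C p)) ∧
      LinearIndependent F (fun b : {x // x ∈ B'} => v b) ∧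
      Submodule.span F (v '' ↑B') = ⊤ ∧
      ∑ b ∈ B', w b = ∑ b ∈ B, w b := by
  classical
  -- the common finrank
  have hrank : ∀ A : Finset S,
      LinearIndependent F (fun x : {x // x ∈ A} => v x) →
      Submodule.span F (v '' ↑A) = ⊤ →
      A.card = Module.finrank F V := by
    intro A hA hAs
    have hb : Submodule.span F (Set.range (fun x : {x // x ∈ A} => v x)) = ⊤ := by
      have hr : Set.range (fun x : {x // x ∈ A} => v x) = v '' ↑A := by
        ext y; simp
      rw [hr]; exact hAs
    have := Module.finrank_eq_card_basis (Module.Basis.mk hA (le_of_eq hb.symm))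
    simp [this, Fintype.card_coe]
  have main : ∀ n (B₂ : Finset S),
      (∑ b ∈ B₂, (Finset.univ.filter (fun t => t < b)).card) = n →
      (↑B₂ : Set S) ⊆ ⋃ p, C p →
      LinearIndependent F (fun b : {x // x ∈ B₂} => v b) →
      Submodule.span F (v '' ↑B₂) = ⊤ →
      (∑ b ∈ B₂, w b = ∑ b ∈ B, w b) →
      ∃ B' : Finset S, (↑B' : Set S) ⊆ (⋃ p, greedy (C p)) ∧
        LinearIndependent F (fun b : {x // x ∈ B'} => v b) ∧
        Submodule.span F (v '' ↑B') = ⊤ ∧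
        ∑ b ∈ B', w b = ∑ b ∈ B, w b := by
    intro n
    induction n using Nat.strong_induction_on with
    | _ n ih =>
      intro B₂ hμ hsub hindep hspan hsum
      by_cases hall : (↑B₂ : Set S) ⊆ ⋃ p, greedy (C p)
      · exact ⟨B₂, hall, hindep, hspan, hsum⟩
      · -- pick a bad element b
        obtain ⟨b, hbB₂, hbnot⟩ := Set.not_subset.mp hall
        obtain ⟨p, hbCp⟩ := Set.mem_iUnion.mp (hsub hbB₂)
        have hbg : b ∉ greedy (C p) := fun h => hbnot (Set.mem_iUnion.mpr ⟨p, h⟩)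
        have hbspan : v b ∈ Submodule.span F (v '' {t | t ∈ greedy (C p) ∧ t < b}) := by
          by_contra hc
          exact hbg ((hgreedy (C p) b hbCp).mpr hc)
        have hnot : v b ∉ Submodule.span F (v '' ((↑B₂ : Set S) \ {b})) :=
          aux_not_mem_span v hindep hbB₂
        -- find g
        have hex : ¬ (v '' {t | t ∈ greedy (C p) ∧ t < b} ⊆
            ↑(Submodule.span F (v '' ((↑B₂ : Set S) \ {b})))) := by
          intro hss
          exact hnot (Submodule.span_le.mpr hss hbspan)
        obtain ⟨x, hxmem, hxnot⟩ := Set.not_subset.mp hex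
        obtain ⟨g, ⟨hgG, hglt⟩, rfl⟩ := hxmem
        have hgnotspan : v g ∉ Submodule.span F (v '' ((↑B₂ : Set S) \ {b})) := hxnot
        have hgne : g ≠ b := ne_of_lt hglt
        have hgnotmem : g ∉ B₂.erase b := by
          intro hg
          apply hgnotspan
          apply Submodule.subset_span
          exact ⟨g, ⟨(Finset.mem_erase.mp hg).2, (Finset.mem_erase.mp hg).1⟩, rfl⟩
        set B₃ := insert g (B₂.erase b) with hB₃def
        have hcoe : (↑B₃ : Set S) = insert g ((↑B₂ : Set S) \ {b}) := by
          simp [hB₃def, Finset.coe_insert, Finset.coe_erase]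
        -- independence of B₃
        have hinjB₂ : Set.InjOn v (↑B₂ : Set S) := aux_injOn v hindep
        have hsetindepB₂ : LinearIndependent F
            (fun x : (v '' (↑B₂ : Set S)) => (x : V)) :=
          (linearIndepOn_iff_image hinjB₂).mp hindep
        have hsetindep' : LinearIndependent F
            (fun x : (v '' ((↑B₂ : Set S) \ {b})) => (x : V)) :=
          (show LinearIndepOn F id (v '' (↑B₂ : Set S)) from hsetindepB₂).mono (Set.image_mono Set.diff_subset)
        have hsetindepB₃ : LinearIndependent F
            (fun x : (insert (v g) (v '' ((↑B₂ : Set S) \ {b})) : Set V) => (x : V)) :=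
          (show LinearIndepOn F id (v '' ((↑B₂ : Set S) \ {b})) from hsetindep').insert (by simpa using hgnotspan)
        have hinjB₃ : Set.InjOn v (↑B₃ : Set S) := by
          rw [hcoe]
          intro x hx y hy hxy
          rcases hx with rfl | hx
          · rcases hy with rfl | hy
            · rfl
            · exact absurd (Submodule.subset_span (Set.mem_image_of_mem v hy))
                (hxy ▸ hgnotspan)
          · rcases hy with rfl | hy
            · exact absurd (Submodule.subset_span (Set.mem_image_of_mem v hx))
                (hxy.symm ▸ hgnotspan)
            · exact hinjB₂ hx.1 hy.1 hxy
        have himage : v '' (↑B₃ : Set S) = insert (v g) (v '' ((↑B₂ : Set S) \ {b})) := by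
          rw [hcoe, Set.image_insert_eq]
        have hindep₃ : LinearIndependent F (fun x : {x // x ∈ B₃} => v x) := by
          have := (linearIndepOn_iff_image hinjB₃).mpr (by rw [himage]; exact hsetindepB₃)
          exact this
        -- cardinality
        have hcard₂ : B₂.card = Module.finrank F V := hrank B₂ hindep hspan
        have hcard₃ : B₃.card = B₂.card := by
          rw [hB₃def, Finset.card_insert_of_notMem hgnotmem,
            Finset.card_erase_of_mem hbB₂]
          have : 1 ≤ B₂.card := Finset.card_pos.mpr ⟨b, hbB₂⟩
          omega
        -- span of B₃
        have hspan₃ : Submodule.span F (v '' ↑B₃) = ⊤ := by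
          have hne : Nonempty {x // x ∈ B₃} :=
            ⟨⟨g, Finset.mem_insert_self _ _⟩⟩
          have := hindep₃.span_eq_top_of_card_eq_finrank
            (by rw [Fintype.card_coe, hcard₃, hcard₂])
          have hr : Set.range (fun x : {x // x ∈ B₃} => v x) = v '' ↑B₃ := by
            ext y; simp
          rwa [hr] at this
        -- subset
        have hsub₃ : (↑B₃ : Set S) ⊆ ⋃ p, C p := by
          rw [hcoe]
          rintro x (rfl | ⟨hx, _⟩)
          · exact Set.mem_iUnion.mpr ⟨p, hgreedy_sub (C p) hgG⟩
          · exact hsub hx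
        -- weights
        have hsumerase : ∑ x ∈ B₂.erase b, w x = (∑ x ∈ B₂, w x) - w b := by
          rw [← Finset.add_sum_erase _ _ hbB₂]; ring
        have hsum₃' : ∑ x ∈ B₃, w x = w g + ((∑ x ∈ B₂, w x) - w b) := by
          rw [hB₃def, Finset.sum_insert hgnotmem, hsumerase]
        have hwle : w g ≤ w b := hle g b (le_of_lt hglt)
        have hle₃ : ∑ x ∈ B₃, w x ≤ ∑ x ∈ B₂, w x := by
          rw [hsum₃']; linarith
        have hge₃ : ∑ x ∈ B, w x ≤ ∑ x ∈ B₃, w x := hBmin B₃ hindep₃ hspan₃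
        have hsum₃ : ∑ x ∈ B₃, w x = ∑ x ∈ B, w x := le_antisymm (hsum ▸ hle₃) hge₃
        -- measure
        have hμ₃ : (∑ x ∈ B₃, (Finset.univ.filter (fun t => t < x)).card) < n := by
          subst hμ
          rw [hB₃def, Finset.sum_insert hgnotmem,
            ← Finset.add_sum_erase _ _ hbB₂]
          have : (Finset.univ.filter (fun t => t < g)).card
              < (Finset.univ.filter (fun t => t < b)).card := by
            apply Finset.card_lt_card
            rw [Finset.ssubset_iff_of_subset]
            · exact ⟨g, by simp [hglt], by simp⟩
            · intro x hx
              simp only [Finset.mem_filter, Finset.mem_univ, true_and] at hx ⊢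
              exact lt_trans hx hglt
          omega
        exact ih _ hμ₃ B₃ rfl hsub₃ hindep₃ hspan₃ hsum₃
  exact main _ B rfl hBsub hBindep hBspan rfl
end
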